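/- arXiv:1905.13131 — 2 statements merged into one kernel-verified Lean document; each statement's English description precedes it below -/
import Mathlib

section
/- Define LB1 = (Σ_{i=1}^m (1/m) min_k d(x_i,y_k)^p)^(1/p) and LB2 = (Σ_{j=1}^n (1/n) min_k d(x_k,y_j)^p)^(1/p). Then max{LB1, LB2} ≤ d_W(X,Y). -/
open Finset

def IsTransportMatrix (m n : ℕ) (C : Fin m → Fin n → ℝ) : Prop :=
  (∀ i j, 0 ≤ C i j) ∧ (∀ i, ∑ j, C i j = 1 / (m : ℝ)) ∧ (∀ j, ∑ i, C i j = 1 / (n : ℝ))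

noncomputable def transportCost {E : Type*} [MetricSpace E] {m n : ℕ} (p : ℝ)
    (x : Fin m → E) (y : Fin n → E) (C : Fin m → Fin n → ℝ) : ℝ :=
  ∑ i, ∑ j, C i j * dist (x i) (y j) ^ p

noncomputable def wassersteinDist {E : Type*} [MetricSpace E] {m n : ℕ} (p : ℝ)
    (x : Fin m → E) (y : Fin n → E) : ℝ :=
  (sInf {c : ℝ | ∃ C, IsTransportMatrix m n C ∧ c = transportCost p x y C}) ^ (1 / p)

/-- With `LB1 = (Σ_i (1/m) min_k d(x_i,y_k)^p)^(1/p)` and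
`LB2 = (Σ_j (1/n) min_k d(x_k,y_j)^p)^(1/p)`, `max {LB1, LB2} ≤ d_W(X,Y)`. -/
theorem max_lower_bounds_le_wasserstein {E : Type*} [MetricSpace E] {m n : ℕ}
    [NeZero m] [NeZero n] {p : ℝ} (hp : 1 ≤ p) (x : Fin m → E) (y : Fin n → E) :
    max
      ((∑ i : Fin m, (1 / (m : ℝ)) * Finset.univ.inf' Finset.univ_nonempty
          (fun k : Fin n => dist (x i) (y k) ^ p)) ^ (1 / p))
      ((∑ j : Fin n, (1 / (n : ℝ)) * Finset.univ.inf' Finset.univ_nonempty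
          (fun k : Fin m => dist (x k) (y j) ^ p)) ^ (1 / p))
      ≤ wassersteinDist p x y := by
  set S : Set ℝ := {c : ℝ | ∃ C, IsTransportMatrix m n C ∧ c = transportCost p x y C}
  have hm : (0:ℝ) < m := by exact_mod_cast Nat.pos_of_ne_zero (NeZero.ne m)
  have hn : (0:ℝ) < n := by exact_mod_cast Nat.pos_of_ne_zero (NeZero.ne n)
  have hSne : S.Nonempty := by
    refine ⟨transportCost p x y (fun _ _ => 1 / (m*n : ℝ)), fun _ _ => 1 / (m*n : ℝ), ⟨?_, ?_, ?_⟩, rfl⟩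
    · intro i j; positivity
    · intro i
      rw [Finset.sum_const, card_univ, Fintype.card_fin, nsmul_eq_mul]
      field_simp
    · intro j
      rw [Finset.sum_const, card_univ, Fintype.card_fin, nsmul_eq_mul]
      field_simp
  have hbdd : BddBelow S := by
    refine ⟨0, fun c hc => ?_⟩
    obtain ⟨C, ⟨hC0, _, _⟩, rfl⟩ := hc
    apply Finset.sum_nonneg; intro i _
    apply Finset.sum_nonneg; intro j _
    have : (0:ℝ) ≤ dist (x i) (y j) ^ p := Real.rpow_nonneg dist_nonneg p
    exact mul_nonneg (hC0 i j) this
  have hLB1 : (∑ i : Fin m, (1 / (m : ℝ)) * Finset.univ.inf' Finset.univ_nonempty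
      (fun k : Fin n => dist (x i) (y k) ^ p)) ≤ sInf S := by
    apply le_csInf hSne
    rintro c ⟨C, ⟨hC0, hrow, hcol⟩, rfl⟩
    unfold transportCost
    apply Finset.sum_le_sum
    intro i _
    calc (1 / (m:ℝ)) * Finset.univ.inf' Finset.univ_nonempty (fun k : Fin n => dist (x i) (y k) ^ p)
        = ∑ j, C i j * Finset.univ.inf' Finset.univ_nonempty (fun k : Fin n => dist (x i) (y k) ^ p) := by
          rw [← Finset.sum_mul, hrow i]
      _ ≤ ∑ j, C i j * dist (x i) (y j) ^ p := by
          apply Finset.sum_le_sum; intro j _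
          exact mul_le_mul_of_nonneg_left
            (Finset.inf'_le _ (Finset.mem_univ j)) (hC0 i j)
  have hLB2 : (∑ j : Fin n, (1 / (n : ℝ)) * Finset.univ.inf' Finset.univ_nonempty
      (fun k : Fin m => dist (x k) (y j) ^ p)) ≤ sInf S := by
    apply le_csInf hSne
    rintro c ⟨C, ⟨hC0, hrow, hcol⟩, rfl⟩
    unfold transportCost
    rw [Finset.sum_comm]
    apply Finset.sum_le_sum
    intro j _
    calc (1 / (n:ℝ)) * Finset.univ.inf' Finset.univ_nonempty (fun k : Fin m => dist (x k) (y j) ^ p)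
        = ∑ i, C i j * Finset.univ.inf' Finset.univ_nonempty (fun k : Fin m => dist (x k) (y j) ^ p) := by
          rw [← Finset.sum_mul, hcol j]
      _ ≤ ∑ i, C i j * dist (x i) (y j) ^ p := by
          apply Finset.sum_le_sum; intro i _
          exact mul_le_mul_of_nonneg_left
            (Finset.inf'_le _ (Finset.mem_univ i)) (hC0 i j)
  have hinv : (0:ℝ) ≤ 1 / p := by positivity
  have hnn1 : (0:ℝ) ≤ ∑ i : Fin m, (1 / (m : ℝ)) * Finset.univ.inf' Finset.univ_nonempty
      (fun k : Fin n => dist (x i) (y k) ^ p) := by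
    apply Finset.sum_nonneg; intro i _
    apply mul_nonneg (by positivity)
    apply Finset.le_inf'; intro k _
    exact Real.rpow_nonneg dist_nonneg p
  have hnn2 : (0:ℝ) ≤ ∑ j : Fin n, (1 / (n : ℝ)) * Finset.univ.inf' Finset.univ_nonempty
      (fun k : Fin m => dist (x k) (y j) ^ p) := by
    apply Finset.sum_nonneg; intro j _
    apply mul_nonneg (by positivity)
    apply Finset.le_inf'; intro k _
    exact Real.rpow_nonneg dist_nonneg p
  exact max_le (Real.rpow_le_rpow hnn1 hLB1 hinv) (Real.rpow_le_rpow hnn2 hLB2 hinv)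
end

section
/- With the star-padding modification D_{i,0} = D_{0,0} = 0 for all i ≥ 0 and D_{0,j} = ∞ for j ≥ 1 (indices: i ranges over columns of the long sequence of length m, j over the short sequence of length n; here D_{i,j} = w(i,j) + min{D_{i,j-1}, D_{i-1,j}, D_{i-1,j-1}}), the quantity min_{1 ≤ i ≤ m} D_{i,n} equals the minimum over all start indices 1 ≤ i_s ≤ m of the ordinary DTW distance (with standard boundary conditions) between the short sequence and the subsequence of the long sequence beginning at i_s and ending at some i_e ≤ m, i.e. subsequential DTW computes min over subsequences [i_s, i_e] of DTW cost. -/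
open scoped ENNReal

/-- The ordinary DTW cost matrix with standard boundary conditions
(`D 0 0 = 0`, infinite boundary otherwise). -/
noncomputable def dtw (w : ℕ → ℕ → NNReal) : ℕ → ℕ → ℝ≥0∞
  | 0, 0 => 0
  | _ + 1, 0 => ⊤
  | 0, _ + 1 => ⊤
  | i + 1, j + 1 =>
      (w (i + 1) (j + 1) : ℝ≥0∞) +
        min (dtw w (i + 1) j) (min (dtw w i (j + 1)) (dtw w i j))
  termination_by i j => (i, j)

/-- The star-padded (subsequential) DTW cost matrix: `D i 0 = 0` for all `i`,
`D 0 j = ∞` for `j ≥ 1`; here the first index ranges over the long sequence. -/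
noncomputable def sdtw (w : ℕ → ℕ → NNReal) : ℕ → ℕ → ℝ≥0∞
  | _, 0 => 0
  | 0, _ + 1 => ⊤
  | i + 1, j + 1 =>
      (w (i + 1) (j + 1) : ℝ≥0∞) +
        min (sdtw w (i + 1) j) (min (sdtw w i (j + 1)) (sdtw w i j))
  termination_by i j => (i, j)

lemma biInf_add (s : Finset ℕ) (a : ℝ≥0∞) (f : ℕ → ℝ≥0∞) :
    (⨅ i ∈ s, (a + f i)) = a + ⨅ i ∈ s, f i := by
  simp_rw [ENNReal.add_iInf]

lemma biInf_min (s : Finset ℕ) (f g : ℕ → ℝ≥0∞) :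
    (⨅ i ∈ s, min (f i) (g i)) = min (⨅ i ∈ s, f i) (⨅ i ∈ s, g i) := by
  apply le_antisymm
  · exact le_min (iInf₂_mono fun i _ => min_le_left _ _)
      (iInf₂_mono fun i _ => min_le_right _ _)
  · exact le_iInf₂ fun i hi => min_le_min (iInf₂_le i hi) (iInf₂_le i hi)

lemma sdtw_eq (w : ℕ → ℕ → NNReal) :
    ∀ i j, sdtw w i (j + 1) =
      ⨅ is ∈ Finset.Icc 1 i, dtw (fun i' j' => w (is - 1 + i') j') (i - is + 1) (j + 1)
  | 0, j => by simp [sdtw]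
  | i + 1, 0 => by
      rw [sdtw]
      simp only [sdtw, min_self, zero_min, add_zero]
      apply le_antisymm
      · apply le_iInf₂
        intro is his
        simp only [Finset.mem_Icc] at his
        obtain ⟨k, hk⟩ : ∃ k, i + 1 - is + 1 = k + 1 := ⟨i + 1 - is, rfl⟩
        rw [hk, dtw]
        have h1 : is - 1 + (k + 1) = i + 1 := by omega
        rw [h1]
        exact le_self_add
      · have hmem : i + 1 ∈ Finset.Icc 1 (i + 1) := by simp
        refine le_trans (iInf₂_le (i + 1) hmem) ?_
        have h2 : i + 1 - (i + 1) + 1 = 0 + 1 := by omega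
        rw [h2, dtw]
        have h3 : i + 1 - 1 + (0 + 1) = i + 1 := by omega
        simp [dtw, h3]
  | i + 1, j + 1 => by
      rw [sdtw, sdtw_eq w (i + 1) j, sdtw_eq w i (j + 1), sdtw_eq w i j]
      have step1 :
          (⨅ is ∈ Finset.Icc 1 (i + 1),
              dtw (fun i' j' => w (is - 1 + i') j') (i + 1 - is + 1) (j + 1 + 1)) =
          ⨅ is ∈ Finset.Icc 1 (i + 1),
            ((w (i + 1) (j + 1 + 1) : ℝ≥0∞) +
              min (dtw (fun i' j' => w (is - 1 + i') j') (i + 1 - is + 1) (j + 1))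
                (min (dtw (fun i' j' => w (is - 1 + i') j') (i + 1 - is) (j + 1 + 1))
                  (dtw (fun i' j' => w (is - 1 + i') j') (i + 1 - is) (j + 1)))) := by
        refine iInf_congr fun is => iInf_congr fun his => ?_
        simp only [Finset.mem_Icc] at his
        rw [dtw]
        have h1 : is - 1 + (i + 1 - is + 1) = i + 1 := by omega
        rw [h1]
      have drop : ∀ j' : ℕ,
          (⨅ is ∈ Finset.Icc 1 (i + 1),
              dtw (fun i' j' => w (is - 1 + i') j') (i + 1 - is) (j' + 1)) =
          ⨅ is ∈ Finset.Icc 1 i,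
              dtw (fun i' j' => w (is - 1 + i') j') (i - is + 1) (j' + 1) := by
        intro j'
        rw [← Finset.insert_Icc_right_eq_Icc_add_one (by omega : 1 ≤ i + 1), Finset.iInf_insert]
        have h0 : i + 1 - (i + 1) = 0 := by omega
        rw [h0]
        have htop : dtw (fun i' j' => w (i + 1 - 1 + i') j') 0 (j' + 1) = ⊤ := by
          rw [dtw]
        rw [htop, top_inf_eq]
        refine iInf_congr fun is => iInf_congr fun his => ?_
        simp only [Finset.mem_Icc] at his
        congr 1
        omega
      rw [step1, biInf_add, biInf_min, biInf_min, drop (j + 1), drop j]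
  termination_by i j => (i, j)

/-- Subsequential DTW computes the minimum over all subsequences `[i_s, i_e]` of
the long sequence of the ordinary DTW distance of the short sequence against
that subsequence (with shifted costs `w (i_s - 1 + i') j'`). -/
theorem sdtw_eq_min_subsequence_dtw (w : ℕ → ℕ → NNReal) (m n : ℕ)
    (hm : 1 ≤ m) (hn : 1 ≤ n) :
    (⨅ i ∈ Finset.Icc 1 m, sdtw w i n) =
      ⨅ is ∈ Finset.Icc 1 m, ⨅ ie ∈ Finset.Icc is m,
        dtw (fun i' j' => w (is - 1 + i') j') (ie - is + 1) n := by
  obtain ⟨n', rfl⟩ : ∃ n', n = n' + 1 := ⟨n - 1, by omega⟩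
  apply le_antisymm
  · refine le_iInf₂ fun is his => le_iInf₂ fun ie hie => ?_
    simp only [Finset.mem_Icc] at his hie
    have hie' : ie ∈ Finset.Icc 1 m := by simp only [Finset.mem_Icc]; omega
    refine le_trans (iInf₂_le ie hie') ?_
    rw [sdtw_eq]
    exact iInf₂_le is (by simp only [Finset.mem_Icc]; omega)
  · refine le_iInf₂ fun i hi => ?_
    simp only [Finset.mem_Icc] at hi
    rw [sdtw_eq]
    refine le_iInf₂ fun is his => ?_
    simp only [Finset.mem_Icc] at his
    refine le_trans (iInf₂_le is (by simp only [Finset.mem_Icc]; omega)) ?_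
    exact iInf₂_le i (by simp only [Finset.mem_Icc]; omega)
end
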